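/- Let G be a strongly connected signed digraph. Then G is structurally balanced if and only if the matrix W·L has 0 as an eigenvalue of algebraic multiplicity exactly one (i.e., 0 is a simple root of the characteristic polynomial of W·L over ℂ) and every other complex eigenvalue of W·L has strictly positive real part. -/

import Mathlib

open Matrix BigOperators Filter

/-- In-degree of node `i`: sum of absolute values of the `i`-th row of `A`. -/
noncomputable def inDeg {n : ℕ} (A : Matrix (Fin n) (Fin n) ℝ) (i : Fin n) : ℝ := ∑ j, |A i j|

/-- Laplacian `L = Δ − A` of the signed digraph with adjacency matrix `A`. -/
noncomputable def lapOf {n : ℕ} (A : Matrix (Fin n) (Fin n) ℝ) : Matrix (Fin n) (Fin n) ℝ :=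
  Matrix.diagonal (inDeg A) - A

/-- Laplacian `L̄ = Δ − Ā` of the induced unsigned digraph. -/
noncomputable def lapBar {n : ℕ} (A : Matrix (Fin n) (Fin n) ℝ) : Matrix (Fin n) (Fin n) ℝ :=
  Matrix.diagonal (inDeg A) - Matrix.of (fun i j => |A i j|)

/-- `det(L̄_ii)`: determinant of `L̄` with its `i`-th row and column removed. -/
noncomputable def minorDet {n : ℕ} (A : Matrix (Fin n) (Fin n) ℝ) (i : Fin n) : ℝ :=
  Matrix.det ((lapBar A).submatrix (fun k : {j : Fin n // j ≠ i} => (k : Fin n))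
    (fun k : {j : Fin n // j ≠ i} => (k : Fin n)))

/-- `W = diag(det(L̄_11), …, det(L̄_nn))`. -/
noncomputable def Wmat {n : ℕ} (A : Matrix (Fin n) (Fin n) ℝ) : Matrix (Fin n) (Fin n) ℝ :=
  Matrix.diagonal (minorDet A)

/-- Mirror adjacency matrix `Â = (W·A + Aᵀ·W)/2`. -/
noncomputable def mirrorAdj {n : ℕ} (A : Matrix (Fin n) (Fin n) ℝ) : Matrix (Fin n) (Fin n) ℝ :=
  (1/2 : ℝ) • (Wmat A * A + Aᵀ * Wmat A)

/-- Mirror Laplacian `L̂ = (W·L + Lᵀ·W)/2`. -/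
noncomputable def mirrorLap {n : ℕ} (A : Matrix (Fin n) (Fin n) ℝ) : Matrix (Fin n) (Fin n) ℝ :=
  (1/2 : ℝ) • (Wmat A * lapOf A + (lapOf A)ᵀ * Wmat A)

/-- `(j, i)` is a directed edge when `a_ij ≠ 0`; strong connectivity: a directed
path between every ordered pair of distinct nodes. -/
def StronglyConnected {n : ℕ} (A : Matrix (Fin n) (Fin n) ℝ) : Prop :=
  ∀ i j : Fin n, i ≠ j → Relation.TransGen (fun u v => A v u ≠ 0) i j

/-- `σ` is the diagonal of a gauge transformation: each entry is `±1`. -/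
def IsGauge {n : ℕ} (σ : Fin n → ℝ) : Prop := ∀ i, σ i = 1 ∨ σ i = -1

/-- Structural balance: there is a gauge transformation `D = diag σ` with all entries
of `D·A·D` (entrywise `σ i * A i j * σ j`) nonnegative. -/
def StructBalanced {n : ℕ} (A : Matrix (Fin n) (Fin n) ℝ) : Prop :=
  ∃ σ : Fin n → ℝ, IsGauge σ ∧ ∀ i j, 0 ≤ σ i * A i j * σ j

/-- Improved Laplacian potential function
`Φ_e(x) = Σ_i Σ_j det(L̄_ii)·|a_ij|·(x_i − sgn(a_ij)·x_j)²`. -/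
noncomputable def PhiE {n : ℕ} (A : Matrix (Fin n) (Fin n) ℝ) (x : Fin n → ℝ) : ℝ :=
  ∑ i, ∑ j, minorDet A i * |A i j| * (x i - Real.sign (A i j) * x j) ^ 2

section Aux
variable {n : ℕ} {A : Matrix (Fin n) (Fin n) ℝ}

lemma lapBar_apply (A : Matrix (Fin n) (Fin n) ℝ) (i j : Fin n) :
    lapBar A i j = (if i = j then inDeg A i else 0) - |A i j| := by
  simp [lapBar, diagonal_apply]

lemma grounded_ker (hsc : StronglyConnected A) (i : Fin n) {t : ℝ} (ht : 0 ≤ t)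
    (x : Fin n → ℝ) (hxi : x i = 0)
    (hrow : ∀ k, k ≠ i → t * x k + ∑ j, lapBar A k j * x j = 0) : x = 0 := by
  by_contra hx
  have hex : ∃ k, x k ≠ 0 := by simpa [funext_iff] using hx
  obtain ⟨k₁, hk₁⟩ := hex
  obtain ⟨k₀, -, hmax⟩ := Finset.exists_max_image Finset.univ (fun k => |x k|) ⟨k₁, Finset.mem_univ _⟩
  set m : ℝ := |x k₀| with hm
  have hmpos : 0 < m := lt_of_lt_of_le (abs_pos.mpr hk₁) (hmax k₁ (Finset.mem_univ _))
  set s : ℝ := if 0 ≤ x k₀ then 1 else -1 with hs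
  set y : Fin n → ℝ := fun k => s * x k with hy
  have habs : ∀ k, |y k| = |x k| := by
    intro k; by_cases h : 0 ≤ x k₀ <;> simp [hy, hs, h, abs_mul]
  have hyk₀ : y k₀ = m := by
    by_cases h : 0 ≤ x k₀
    · simp [hy, hs, h, hm, abs_of_nonneg h]
    · push_neg at h
      simp [hy, hs, not_le.mpr h, hm, abs_of_neg h]
  have hyi : y i = 0 := by simp [hy, hxi]
  have hrowy : ∀ k, k ≠ i → t * y k + ∑ j, lapBar A k j * y j = 0 := by
    intro k hk
    have h0 := hrow k hk
    have : t * y k + ∑ j, lapBar A k j * y j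
        = s * (t * x k + ∑ j, lapBar A k j * x j) := by
      rw [mul_add, Finset.mul_sum]
      congr 1
      · simp only [hy]; ring
      · apply Finset.sum_congr rfl; intros; simp only [hy]; ring
    rw [this, h0, mul_zero]
  have hyle : ∀ k, y k ≤ m := by
    intro k
    calc y k ≤ |y k| := le_abs_self _
    _ = |x k| := habs k
    _ ≤ m := hmax k (Finset.mem_univ _)
  have key : ∀ k, y k = m → ∀ j, A k j ≠ 0 → y j = m := by
    intro k hk j hAj
    have hki : k ≠ i := by rintro rfl; rw [hyi] at hk; exact absurd hk.symm (ne_of_gt hmpos)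
    have hsum : ∑ j, lapBar A k j * y j = inDeg A k * y k - ∑ j, |A k j| * y j := by
      simp only [lapBar_apply, sub_mul, Finset.sum_sub_distrib, ite_mul, zero_mul]
      rw [Finset.sum_ite_eq Finset.univ k (fun j => inDeg A k * y j)]
      simp
    have e1 : ∑ j, |A k j| * (m - y j) = inDeg A k * m - ∑ j, |A k j| * y j := by
      rw [inDeg, Finset.sum_mul, ← Finset.sum_sub_distrib]
      apply Finset.sum_congr rfl; intros; ring
    have hterm : ∀ j ∈ Finset.univ, (0:ℝ) ≤ |A k j| * (m - y j) :=
      fun j _ => mul_nonneg (abs_nonneg _) (sub_nonneg.mpr (hyle j))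
    have hS : 0 ≤ ∑ j, |A k j| * (m - y j) := Finset.sum_nonneg hterm
    have htm : 0 ≤ t * m := mul_nonneg ht hmpos.le
    have h0 : t * m + ∑ j, |A k j| * (m - y j) = 0 := by
      have h2 := hrowy k hki
      rw [hsum, hk] at h2
      rw [e1]; linarith
    have hS0 : ∑ j, |A k j| * (m - y j) = 0 := by linarith
    have := (Finset.sum_eq_zero_iff_of_nonneg hterm).mp hS0 j (Finset.mem_univ _)
    rcases mul_eq_zero.mp this with h | h
    · exact absurd h (abs_ne_zero.mpr hAj)
    · linarith [sub_eq_zero.mp h]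
  have hik₀ : i ≠ k₀ := by
    rintro rfl; rw [hyi] at hyk₀; exact absurd hyk₀.symm (ne_of_gt hmpos)
  have path : Relation.TransGen (fun u v => A u v ≠ 0) k₀ i :=
    Relation.transGen_swap.mp (hsc i k₀ hik₀)
  have prop : ∀ b, Relation.TransGen (fun u v => A u v ≠ 0) k₀ b → y b = m := by
    intro b hb
    induction hb with
    | single h => exact key k₀ hyk₀ _ h
    | tail _ h ih => exact key _ ih _ h
  have := prop i path
  rw [hyi] at this
  exact absurd this.symm (ne_of_gt hmpos)


lemma eval_neg_charpoly {m : Type*} [Fintype m] [DecidableEq m] (B : Matrix m m ℝ) (t : ℝ) :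
    ((-B).charpoly).eval t = (B + t • 1).det := by
  rw [Matrix.charpoly, ← Polynomial.coe_evalRingHom, RingHom.map_det]
  congr 1
  ext p q
  by_cases h : p = q
  · subst h; simp [charmatrix_apply_eq, Matrix.one_apply, add_comm]
  · simp [charmatrix_apply_ne _ _ _ h, Matrix.one_apply, h]

lemma groundedDet_ne_zero (hsc : StronglyConnected A) (i : Fin n) {t : ℝ} (ht : 0 ≤ t) :
    ((lapBar A).submatrix (fun k : {j : Fin n // j ≠ i} => (k : Fin n))
      (fun k : {j : Fin n // j ≠ i} => (k : Fin n)) + t • 1).det ≠ 0 := by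
  set B := (lapBar A).submatrix (fun k : {j : Fin n // j ≠ i} => (k : Fin n))
      (fun k : {j : Fin n // j ≠ i} => (k : Fin n)) with hB
  intro hdet
  obtain ⟨y, hy0, hy⟩ := (Matrix.exists_mulVec_eq_zero_iff).mpr hdet
  set x : Fin n → ℝ := fun k => if h : k = i then 0 else y ⟨k, h⟩ with hxdef
  have hxi : x i = 0 := by simp [hxdef]
  have hrow : ∀ k, k ≠ i → t * x k + ∑ j, lapBar A k j * x j = 0 := by
    intro k hk
    have hcomp := congrFun hy ⟨k, hk⟩
    have hterm : ∀ q : {j : Fin n // j ≠ i}, (B + t • 1) ⟨k, hk⟩ q * y q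
        = B ⟨k, hk⟩ q * y q + (if (⟨k, hk⟩ : {j : Fin n // j ≠ i}) = q then t * y q else 0) := by
      intro q
      by_cases h : (⟨k, hk⟩ : {j : Fin n // j ≠ i}) = q <;>
        simp [Matrix.add_apply, Matrix.smul_apply, Matrix.one_apply, h, add_mul]
    have hc : ((B + t • 1) *ᵥ y) ⟨k, hk⟩
        = (∑ q : {j : Fin n // j ≠ i}, B ⟨k, hk⟩ q * y q) + t * y ⟨k, hk⟩ := by
      have h0 : ((B + t • 1) *ᵥ y) ⟨k, hk⟩ = ∑ q, (B + t • 1) ⟨k, hk⟩ q * y q := rfl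
      rw [h0, Finset.sum_congr rfl (fun q _ => hterm q), Finset.sum_add_distrib,
        Finset.sum_ite_eq Finset.univ (⟨k, hk⟩ : {j : Fin n // j ≠ i}) (fun q => t * y q)]
      simp
    have hsum : ∑ j, lapBar A k j * x j = ∑ q : {j : Fin n // j ≠ i}, B ⟨k, hk⟩ q * y q := by
      rw [← Finset.sum_erase_add _ _ (Finset.mem_univ i)]
      have h1 : lapBar A k i * x i = 0 := by rw [hxi, mul_zero]
      rw [h1, add_zero]
      rw [Finset.sum_subtype (p := fun j => j ≠ i) (Finset.univ.erase i)
        (fun j => by simp [Finset.mem_erase]) (fun j => lapBar A k j * x j)]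
      apply Finset.sum_congr rfl
      rintro ⟨q, hq⟩ -
      simp [hB, hxdef, hq]
    rw [hsum]
    have : x k = y ⟨k, hk⟩ := by simp [hxdef, hk]
    rw [this]
    rw [hcomp] at hc
    simp only [Pi.zero_apply] at hc
    linarith [hc]
  have := grounded_ker hsc i ht x hxi hrow
  apply hy0
  funext q
  have : x q = 0 := congrFun this q
  simpa [hxdef, q.2] using this

lemma minorDet_pos (hn : 2 ≤ n) (hsc : StronglyConnected A) (i : Fin n) : 0 < minorDet A i := by
  classical
  set B := (lapBar A).submatrix (fun k : {j : Fin n // j ≠ i} => (k : Fin n))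
      (fun k : {j : Fin n // j ≠ i} => (k : Fin n)) with hB
  set p := (-B).charpoly with hp
  have hne : ∀ t : ℝ, 0 ≤ t → p.eval t ≠ 0 := by
    intro t ht
    rw [hp, eval_neg_charpoly]
    exact groundedDet_ne_zero hsc i ht
  have hmono : p.Monic := Matrix.charpoly_monic _
  have hdeg : 0 < p.natDegree := by
    rw [hp, Matrix.charpoly_natDegree_eq_dim]
    simp only [Fintype.card_subtype_compl, Fintype.card_subtype_eq, Fintype.card_fin]
    omega
  have htend : Tendsto (fun t => p.eval t) atTop atTop :=
    p.tendsto_atTop_of_leadingCoeff_nonneg (Polynomial.natDegree_pos_iff_degree_pos.mp hdeg)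
      (by rw [hmono.leadingCoeff]; norm_num)
  obtain ⟨T, hT1, hT0⟩ := ((htend.eventually_ge_atTop 1).and (eventually_ge_atTop (0:ℝ))).exists
  have hm0 : minorDet A i = p.eval 0 := by
    rw [hp, eval_neg_charpoly, minorDet]
    congr 1
    simp
    exact hB.symm
  rw [hm0]
  rcases lt_trichotomy (p.eval 0) 0 with h | h | h
  · exfalso
    have hc : ContinuousOn (fun t => p.eval t) (Set.Icc 0 T) :=
      (Polynomial.continuous p).continuousOn
    have hsub := intermediate_value_Icc hT0 hc
    have : (0:ℝ) ∈ Set.Icc (p.eval 0) (p.eval T) := ⟨h.le, by linarith⟩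
    obtain ⟨c, hc1, hc2⟩ := hsub this
    exact hne c hc1.1 hc2
  · exact absurd h (hne 0 le_rfl)
  · exact h


lemma kernel_lapBar (hsc : StronglyConnected A) (x : Fin n → ℝ)
    (hx : lapBar A *ᵥ x = 0) (k l : Fin n) : x k = x l := by
  have hrowsum : ∀ k, ∑ j, lapBar A k j = 0 := fun k => by
    simp [lapBar, Finset.sum_sub_distrib, diagonal_apply, Finset.sum_ite_eq', inDeg]
  set x' : Fin n → ℝ := fun k => x k - x l with hx'
  have h0 : x' = 0 := by
    apply grounded_ker hsc l le_rfl x' (by simp [hx'])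
    intro k hk
    have h1 : (lapBar A *ᵥ x) k = 0 := by rw [hx]; rfl
    have h2 : (lapBar A *ᵥ x) k = ∑ j, lapBar A k j * x j := rfl
    have h3 : ∑ j, lapBar A k j * x' j
        = ∑ j, lapBar A k j * x j - (∑ j, lapBar A k j) * x l := by
      rw [Finset.sum_mul, ← Finset.sum_sub_distrib]
      apply Finset.sum_congr rfl; intros; simp [hx']; ring
    rw [zero_mul, zero_add, h3, hrowsum, ← h2, h1]
    ring
  have := congrFun h0 k
  simpa [hx', sub_eq_zero] using this

lemma adjugate_diag {m : Type*} [Fintype m] [DecidableEq m] (M : Matrix m m ℝ) (i : m) :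
    adjugate M i i = (M.submatrix (fun k : {j : m // j ≠ i} => (k : m))
      (fun k : {j : m // j ≠ i} => (k : m))).det := by
  classical
  rw [adjugate_apply]
  rw [Matrix.twoBlockTriangular_det _ (fun j => j ≠ i) ?hz]
  case hz =>
    intro a ha b hb
    have ha' : a = i := not_not.mp ha
    subst ha'
    rw [Matrix.updateRow_self]
    simp [Pi.single_eq_of_ne hb]
  have h1 : (M.updateRow i (Pi.single i 1)).toSquareBlockProp (fun j => j ≠ i)
      = M.submatrix (fun k : {j : m // j ≠ i} => (k : m)) (fun k : {j : m // j ≠ i} => (k : m)) := by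
    ext a b
    simp [Matrix.toSquareBlockProp, Matrix.updateRow_ne a.2]
  haveI : Unique {a : m // ¬a ≠ i} :=
    ⟨⟨⟨i, by simp⟩⟩, by rintro ⟨x, hx⟩; simp only [not_not] at hx; exact Subtype.ext hx⟩
  have h2 : ((M.updateRow i (Pi.single i 1)).toSquareBlockProp (fun j => ¬j ≠ i)).det = 1 := by
    rw [Matrix.det_unique]
    have hd : ∀ a b : {a : m // ¬a ≠ i},
        ((M.updateRow i (Pi.single i 1)).toSquareBlockProp (fun j => ¬j ≠ i)) a b
        = M.updateRow i (Pi.single i 1) i i := by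
      rintro ⟨a, ha⟩ ⟨b, hb⟩
      simp only [not_not] at ha hb
      subst ha; subst hb
      rfl
    rw [hd, Matrix.updateRow_self, Pi.single_eq_same]
  rw [h1, h2, mul_one]

lemma wbar_left (hn : 2 ≤ n) (hsc : StronglyConnected A) (j : Fin n) :
    ∑ k, minorDet A k * lapBar A k j = 0 := by
  classical
  have hone : (fun _ : Fin n => (1:ℝ)) ≠ 0 := by
    intro h
    have := congrFun h ⟨0, by omega⟩
    norm_num at this
  have hmv : lapBar A *ᵥ (fun _ => (1:ℝ)) = 0 := by
    funext k
    simp only [Matrix.mulVec, dotProduct, mul_one]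
    simp [lapBar, Finset.sum_sub_distrib, diagonal_apply, Finset.sum_ite_eq', inDeg]
  have hdet : (lapBar A).det = 0 :=
    Matrix.exists_mulVec_eq_zero_iff.mp ⟨_, hone, hmv⟩
  have hLadj : lapBar A * adjugate (lapBar A) = 0 := by
    rw [Matrix.mul_adjugate, hdet, zero_smul]
  have hadjL : adjugate (lapBar A) * lapBar A = 0 := by
    rw [Matrix.adjugate_mul, hdet, zero_smul]
  have hconst : ∀ jc c k : Fin n, adjugate (lapBar A) k jc = adjugate (lapBar A) c jc := by
    intro jc c k
    apply kernel_lapBar hsc (fun k => adjugate (lapBar A) k jc)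
    funext i'
    have : (lapBar A * adjugate (lapBar A)) i' jc = 0 := by rw [hLadj]; rfl
    simpa [Matrix.mulVec, Matrix.mul_apply, dotProduct] using this
  have i₀ : Fin n := ⟨0, by omega⟩
  have hentry : (adjugate (lapBar A) * lapBar A) i₀ j = 0 := by rw [hadjL]; rfl
  rw [Matrix.mul_apply] at hentry
  rw [← hentry]
  apply Finset.sum_congr rfl
  intro k _
  congr 1
  rw [hconst k k i₀, adjugate_diag]
  rfl

lemma colsum (hn : 2 ≤ n) (hsc : StronglyConnected A) (j : Fin n) :
    ∑ k, minorDet A k * |A k j| = minorDet A j * inDeg A j := by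
  have h := wbar_left hn hsc (A := A) j
  simp only [lapBar_apply, mul_sub, Finset.sum_sub_distrib, mul_ite, mul_zero] at h
  rw [Finset.sum_ite_eq' Finset.univ j (fun k => minorDet A k * inDeg A k)] at h
  simp only [Finset.mem_univ, if_true] at h
  linarith


lemma abs_mul_rsign (a : ℝ) : |a| * Real.sign a = a := by
  rcases lt_trichotomy a 0 with h | h | h
  · rw [Real.sign_of_neg h, abs_of_neg h]; ring
  · simp [h]
  · rw [Real.sign_of_pos h, abs_of_pos h]; ring

lemma abs_mul_rsign_sq (a : ℝ) : |a| * (Real.sign a) ^ 2 = |a| := by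
  rcases lt_trichotomy a 0 with h | h | h
  · rw [Real.sign_of_neg h]; ring
  · simp [h]
  · rw [Real.sign_of_pos h]; ring

lemma dot_eq (x : Fin n → ℝ) :
    x ⬝ᵥ ((Wmat A * lapOf A) *ᵥ x)
      = (∑ i, minorDet A i * inDeg A i * x i ^ 2)
        - ∑ i, ∑ j, minorDet A i * A i j * x i * x j := by
  have h0 : x ⬝ᵥ ((Wmat A * lapOf A) *ᵥ x)
      = ∑ i, ∑ j, x i * ((Wmat A * lapOf A) i j * x j) := by
    simp [dotProduct, Matrix.mulVec, Finset.mul_sum]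
  rw [h0, ← Finset.sum_sub_distrib]
  apply Finset.sum_congr rfl
  intro i _
  have hM : ∀ j, (Wmat A * lapOf A) i j
      = minorDet A i * ((if i = j then inDeg A i else 0) - A i j) := by
    intro j
    rw [Wmat, Matrix.diagonal_mul]
    rfl
  simp only [hM]
  have hsplit : ∀ j, x i * (minorDet A i * ((if i = j then inDeg A i else 0) - A i j) * x j)
      = (if j = i then minorDet A i * inDeg A i * x i ^ 2 else 0)
        - minorDet A i * A i j * x i * x j := by
    intro j
    rcases eq_or_ne i j with h | h
    · subst h
      split_ifs with h1
      · ring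
      · exact absurd rfl h1
    · simp only [if_neg h, if_neg (Ne.symm h)]; ring
  rw [Finset.sum_congr rfl (fun j _ => hsplit j), Finset.sum_sub_distrib,
    Finset.sum_ite_eq' Finset.univ i (fun _ => minorDet A i * inDeg A i * x i ^ 2)]
  simp

lemma phiE_eq (hn : 2 ≤ n) (hsc : StronglyConnected A) (x : Fin n → ℝ) :
    PhiE A x = 2 * (∑ i, minorDet A i * inDeg A i * x i ^ 2)
        - 2 * ∑ i, ∑ j, minorDet A i * A i j * x i * x j := by
  have hterm : ∀ i j, minorDet A i * |A i j| * (x i - Real.sign (A i j) * x j) ^ 2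
      = (minorDet A i * |A i j| * x i ^ 2 + minorDet A i * |A i j| * x j ^ 2)
        - 2 * (minorDet A i * A i j * x i * x j) := by
    intro i j
    have h1 := abs_mul_rsign (A i j)
    have h2 := abs_mul_rsign_sq (A i j)
    linear_combination (minorDet A i * x j ^ 2) * h2 - (2 * minorDet A i * x i * x j) * h1
  rw [PhiE]
  rw [Finset.sum_congr rfl (fun i _ => Finset.sum_congr rfl (fun j _ => hterm i j))]
  simp only [Finset.sum_sub_distrib, Finset.sum_add_distrib]
  have e1 : ∑ i, ∑ j, minorDet A i * |A i j| * x i ^ 2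
      = ∑ i, minorDet A i * inDeg A i * x i ^ 2 := by
    apply Finset.sum_congr rfl
    intro i _
    rw [inDeg, Finset.mul_sum, Finset.sum_mul]
    try (apply Finset.sum_congr rfl; intros; ring)
  have e2 : ∑ i, ∑ j, minorDet A i * |A i j| * x j ^ 2
      = ∑ i, minorDet A i * inDeg A i * x i ^ 2 := by
    rw [Finset.sum_comm]
    apply Finset.sum_congr rfl
    intro j _
    have : ∑ i, minorDet A i * |A i j| * x j ^ 2
        = (∑ i, minorDet A i * |A i j|) * x j ^ 2 := by
      rw [Finset.sum_mul]
    rw [this, colsum hn hsc j]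
  have e3 : ∑ i, ∑ j, 2 * (minorDet A i * A i j * x i * x j)
      = 2 * ∑ i, ∑ j, minorDet A i * A i j * x i * x j := by
    simp [Finset.mul_sum]
  rw [e1, e2, e3]
  ring

lemma quad_eq (hn : 2 ≤ n) (hsc : StronglyConnected A) (x : Fin n → ℝ) :
    PhiE A x = 2 * (x ⬝ᵥ ((Wmat A * lapOf A) *ᵥ x)) := by
  rw [phiE_eq hn hsc, dot_eq]
  ring

lemma phiE_nonneg (hn : 2 ≤ n) (hsc : StronglyConnected A) (x : Fin n → ℝ) :
    0 ≤ PhiE A x := by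
  apply Finset.sum_nonneg
  intro i _
  apply Finset.sum_nonneg
  intro j _
  have := minorDet_pos hn hsc (A := A) i
  positivity

lemma quad_nonneg (hn : 2 ≤ n) (hsc : StronglyConnected A) (x : Fin n → ℝ) :
    0 ≤ x ⬝ᵥ ((Wmat A * lapOf A) *ᵥ x) := by
  have h := phiE_nonneg hn hsc (A := A) x
  rw [quad_eq hn hsc] at h
  linarith

lemma phiE_zero_edge (hn : 2 ≤ n) (hsc : StronglyConnected A) (x : Fin n → ℝ)
    (hx : PhiE A x = 0) : ∀ i j, A i j ≠ 0 → x i = Real.sign (A i j) * x j := by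
  intro i j hij
  have hnn : ∀ i ∈ Finset.univ, (0:ℝ) ≤ ∑ j, minorDet A i * |A i j| * (x i - Real.sign (A i j) * x j) ^ 2 := by
    intro i _
    apply Finset.sum_nonneg
    intro j _
    have := minorDet_pos hn hsc (A := A) i
    positivity
  have h1 := (Finset.sum_eq_zero_iff_of_nonneg hnn).mp hx i (Finset.mem_univ _)
  have hnn2 : ∀ j ∈ Finset.univ, (0:ℝ) ≤ minorDet A i * |A i j| * (x i - Real.sign (A i j) * x j) ^ 2 := by
    intro j _
    have := minorDet_pos hn hsc (A := A) i
    positivity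
  have h2 := (Finset.sum_eq_zero_iff_of_nonneg hnn2).mp h1 j (Finset.mem_univ _)
  have hw := minorDet_pos hn hsc (A := A) i
  have habs : |A i j| > 0 := abs_pos.mpr hij
  have hsq : (x i - Real.sign (A i j) * x j) ^ 2 = 0 := by
    by_contra hc
    have : (x i - Real.sign (A i j) * x j) ^ 2 > 0 :=
      lt_of_le_of_ne (sq_nonneg _) (Ne.symm hc)
    nlinarith [mul_pos (mul_pos hw habs) this]
  have := pow_eq_zero_iff (n := 2) (by norm_num) |>.mp hsq
  linarith [sub_eq_zero.mp this]


lemma eigvec_of_root {m : Type*} [Fintype m] [DecidableEq m] [Nonempty m]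
    (N : Matrix m m ℂ) {μ : ℂ} (h : N.charpoly.IsRoot μ) :
    ∃ z : m → ℂ, z ≠ 0 ∧ N *ᵥ z = μ • z := by
  have hdet : (μ • (1 : Matrix m m ℂ) - N).det = 0 := by
    have h1 : Polynomial.eval μ N.charpoly = 0 := h
    rw [Matrix.charpoly, ← Polynomial.coe_evalRingHom, RingHom.map_det] at h1
    rw [← h1]
    congr 1
    ext p q
    by_cases hpq : p = q
    · subst hpq
      simp [charmatrix_apply_eq, Matrix.one_apply]
    · simp [charmatrix_apply_ne _ _ _ hpq, Matrix.one_apply, hpq]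
  obtain ⟨z, hz0, hz⟩ := Matrix.exists_mulVec_eq_zero_iff.mpr hdet
  refine ⟨z, hz0, ?_⟩
  have h2 : (μ • (1 : Matrix m m ℂ) - N) *ᵥ z = μ • z - N *ᵥ z := by
    rw [Matrix.sub_mulVec, Matrix.smul_mulVec, Matrix.one_mulVec]
  rw [h2] at hz
  linear_combination (norm := module) -hz

lemma eig_re {M : Matrix (Fin n) (Fin n) ℝ} {μ : ℂ} {z : Fin n → ℂ}
    (hz : (M.map Complex.ofReal) *ᵥ z = μ • z) :
    M *ᵥ (fun i => (z i).re) = (fun i => μ.re * (z i).re - μ.im * (z i).im) := by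
  funext i
  have h := congrFun hz i
  simp only [Matrix.mulVec, dotProduct, Matrix.map_apply, Pi.smul_apply,
    smul_eq_mul] at h
  have hre := congrArg Complex.re h
  simp only [Complex.re_sum, Complex.mul_re, Complex.ofReal_re, Complex.ofReal_im,
    zero_mul, sub_zero] at hre
  simpa [Matrix.mulVec, dotProduct] using hre

lemma eig_im {M : Matrix (Fin n) (Fin n) ℝ} {μ : ℂ} {z : Fin n → ℂ}
    (hz : (M.map Complex.ofReal) *ᵥ z = μ • z) :
    M *ᵥ (fun i => (z i).im) = (fun i => μ.re * (z i).im + μ.im * (z i).re) := by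
  funext i
  have h := congrFun hz i
  simp only [Matrix.mulVec, dotProduct, Matrix.map_apply, Pi.smul_apply,
    smul_eq_mul] at h
  have him := congrArg Complex.im h
  simp only [Complex.im_sum, Complex.mul_im, Complex.ofReal_re, Complex.ofReal_im,
    zero_mul, add_zero] at him
  simpa [Matrix.mulVec, dotProduct] using him

lemma edge_propagate (hsc : StronglyConnected A) (g : Fin n → ℝ)
    (hstep : ∀ i j, A i j ≠ 0 → g i = g j) : ∀ k l, g k = g l := by
  intro k l
  rcases eq_or_ne k l with rfl | h
  · rfl
  · have hpath := hsc l k (Ne.symm h)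
    have : ∀ b, Relation.TransGen (fun u v => A v u ≠ 0) l b → g b = g l := by
      intro b hb
      induction hb with
      | single h1 => exact hstep _ _ h1
      | tail _ h1 ih => exact (hstep _ _ h1).trans ih
    exact this k hpath


lemma gauge_sq {σ : Fin n → ℝ} (hσ : IsGauge σ) (i : Fin n) : σ i * σ i = 1 := by
  rcases hσ i with h | h <;> rw [h] <;> norm_num

lemma gauge_ne {σ : Fin n → ℝ} (hσ : IsGauge σ) (i : Fin n) : σ i ≠ 0 := by
  rcases hσ i with h | h <;> rw [h] <;> norm_num

lemma gauge_abs {σ : Fin n → ℝ} (hσ : IsGauge σ) (i : Fin n) : |σ i| = 1 := by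
  rcases hσ i with h | h <;> rw [h] <;> norm_num

lemma bal_eq {σ : Fin n → ℝ} (hσ : IsGauge σ) (hbal : ∀ i j, 0 ≤ σ i * A i j * σ j)
    (i j : Fin n) : A i j = σ i * σ j * |A i j| := by
  have h1 : σ i * A i j * σ j = |A i j| := by
    have habs : |σ i * A i j * σ j| = |A i j| := by
      rw [abs_mul, abs_mul, gauge_abs hσ, gauge_abs hσ]
      ring
    rw [abs_of_nonneg (hbal i j)] at habs
    exact habs
  calc A i j = (σ i * σ i) * A i j * (σ j * σ j) := by rw [gauge_sq hσ, gauge_sq hσ]; ring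
  _ = σ i * (σ i * A i j * σ j) * σ j := by ring
  _ = σ i * σ j * |A i j| := by rw [h1]; ring

lemma bal_sign {σ : Fin n → ℝ} (hσ : IsGauge σ) (hbal : ∀ i j, 0 ≤ σ i * A i j * σ j)
    (i j : Fin n) (h : A i j ≠ 0) : Real.sign (A i j) = σ i * σ j := by
  have he := bal_eq hσ hbal i j
  have hpos : 0 < |A i j| := abs_pos.mpr h
  have hprod : σ i * σ j = 1 ∨ σ i * σ j = -1 := by
    rcases hσ i with h1 | h1 <;> rcases hσ j with h2 | h2 <;> rw [h1, h2] <;> norm_num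
  rcases hprod with hp | hp <;> rw [hp] at he ⊢
  · rw [one_mul] at he
    rw [he]
    exact Real.sign_of_pos hpos
  · have he' : A i j < 0 := by rw [he]; linarith
    exact Real.sign_of_neg he'

lemma lap_gauge {σ : Fin n → ℝ} (hσ : IsGauge σ) (hbal : ∀ i j, 0 ≤ σ i * A i j * σ j) :
    lapOf A *ᵥ σ = 0 := by
  funext k
  have h0 : (lapOf A *ᵥ σ) k = ∑ j, ((if k = j then inDeg A k else 0) - A k j) * σ j := rfl
  rw [h0]
  have hterm : ∀ j, ((if k = j then inDeg A k else 0) - A k j) * σ j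
      = (if j = k then inDeg A k * σ k else 0) - σ k * |A k j| := by
    intro j
    have hb := bal_eq hσ hbal k j
    rcases eq_or_ne k j with h | h
    · subst h
      rw [if_pos rfl, if_pos rfl]
      have h1 := gauge_sq hσ k
      linear_combination (-(σ k)) * hb - (σ k * |A k k|) * h1
    · rw [if_neg h, if_neg (Ne.symm h)]
      have h1 := gauge_sq hσ j
      linear_combination (-(σ j)) * hb - (σ k * |A k j|) * h1
  rw [Finset.sum_congr rfl (fun j _ => hterm j), Finset.sum_sub_distrib,
    Finset.sum_ite_eq' Finset.univ k (fun _ => inDeg A k * σ k)]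
  simp only [Finset.mem_univ, if_true, Pi.zero_apply]
  rw [← Finset.mul_sum, ← inDeg]
  ring

lemma gauge_left_null (hn : 2 ≤ n) (hsc : StronglyConnected A) {σ : Fin n → ℝ}
    (hσ : IsGauge σ) (hbal : ∀ i j, 0 ≤ σ i * A i j * σ j) (x : Fin n → ℝ) :
    σ ⬝ᵥ ((Wmat A * lapOf A) *ᵥ x) = 0 := by
  have hrow : ∀ jc : Fin n, ∑ k, σ k * ((Wmat A * lapOf A) k jc) = 0 := by
    intro jc
    have hM : ∀ k, (Wmat A * lapOf A) k jc
        = minorDet A k * ((if k = jc then inDeg A k else 0) - A k jc) := by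
      intro k
      rw [Wmat, Matrix.diagonal_mul]
      rfl
    have hterm : ∀ k, σ k * ((Wmat A * lapOf A) k jc)
        = (if k = jc then σ jc * (minorDet A jc * inDeg A jc) else 0)
          - σ jc * (minorDet A k * |A k jc|) := by
      intro k
      rw [hM k]
      have hb := bal_eq hσ hbal k jc
      have h1 := gauge_sq hσ k
      rcases eq_or_ne k jc with h | h
      · subst h
        rw [if_pos rfl, if_pos rfl]
        linear_combination (-(σ k * minorDet A k)) * hb - (σ k * minorDet A k * |A k k|) * h1
      · rw [if_neg h, if_neg h]
        linear_combination (-(σ k * minorDet A k)) * hb - (σ jc * minorDet A k * |A k jc|) * h1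
    rw [Finset.sum_congr rfl (fun k _ => hterm k), Finset.sum_sub_distrib,
      Finset.sum_ite_eq' Finset.univ jc (fun _ => σ jc * (minorDet A jc * inDeg A jc))]
    simp only [Finset.mem_univ, if_true]
    rw [← Finset.mul_sum, colsum hn hsc jc]
    ring
  have h0 : σ ⬝ᵥ ((Wmat A * lapOf A) *ᵥ x)
      = ∑ k, ∑ j, σ k * ((Wmat A * lapOf A) k j * x j) := by
    simp [dotProduct, Matrix.mulVec, Finset.mul_sum]
  rw [h0, Finset.sum_comm]
  have hfac : ∀ j, ∑ k, σ k * ((Wmat A * lapOf A) k j * x j)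
      = (∑ k, σ k * (Wmat A * lapOf A) k j) * x j := by
    intro j
    rw [Finset.sum_mul]
    apply Finset.sum_congr rfl
    intros; ring
  rw [Finset.sum_congr rfl fun j _ => hfac j]
  simp [hrow]


lemma lapOf_apply (A : Matrix (Fin n) (Fin n) ℝ) (i j : Fin n) :
    lapOf A i j = (if i = j then inDeg A i else 0) - A i j := rfl

lemma Wmul_apply (A : Matrix (Fin n) (Fin n) ℝ) (i j : Fin n) :
    (Wmat A * lapOf A) i j = minorDet A i * lapOf A i j := by
  rw [Wmat, Matrix.diagonal_mul]

lemma gauge_mulVec_zero {σ : Fin n → ℝ} (hσ : IsGauge σ)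
    (hbal : ∀ i j, 0 ≤ σ i * A i j * σ j) : (Wmat A * lapOf A) *ᵥ σ = 0 := by
  rw [← Matrix.mulVec_mulVec, lap_gauge hσ hbal, Matrix.mulVec_zero]

lemma charpoly_factor (hn : 2 ≤ n) (hsc : StronglyConnected A) {σ : Fin n → ℝ}
    (hσ : IsGauge σ) (hbal : ∀ i j, 0 ≤ σ i * A i j * σ j) :
    ∃ q : Polynomial ℝ, (Wmat A * lapOf A).charpoly = Polynomial.X * q ∧ q.eval 0 ≠ 0 := by
  classical
  set Mr := Wmat A * lapOf A with hMr
  have hMσ : Mr *ᵥ σ = 0 := gauge_mulVec_zero hσ hbal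
  have j₀ : Fin n := ⟨0, by omega⟩
  have hcol : ∀ k, ∑ i, Polynomial.C (σ i) • charmatrix Mr k i
      = Polynomial.C (σ k) * Polynomial.X := by
    intro k
    have hterm : ∀ i, Polynomial.C (σ i) • charmatrix Mr k i
        = (if i = k then Polynomial.C (σ k) * Polynomial.X else 0)
          - Polynomial.C (σ i * Mr k i) := by
      intro i
      rcases eq_or_ne k i with h | h
      · subst h
        rw [charmatrix_apply_eq, if_pos rfl, smul_eq_mul, mul_sub, ← Polynomial.C_mul]
      · rw [charmatrix_apply_ne _ _ _ h, if_neg (Ne.symm h), smul_eq_mul, mul_neg,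
          ← Polynomial.C_mul, zero_sub]
    rw [Finset.sum_congr rfl fun i _ => hterm i, Finset.sum_sub_distrib,
      Finset.sum_ite_eq' Finset.univ k (fun _ => Polynomial.C (σ k) * Polynomial.X)]
    have hz : ∑ i, σ i * Mr k i = 0 := by
      have h := congrFun hMσ k
      simp only [Matrix.mulVec, dotProduct, Pi.zero_apply] at h
      rw [← h]
      apply Finset.sum_congr rfl
      intros; ring
    rw [← map_sum Polynomial.C _ Finset.univ, hz]
    simp
  have h1 := Matrix.det_updateCol_sum (charmatrix Mr) j₀ (fun i => Polynomial.C (σ i))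
  rw [show (fun k => ∑ i, Polynomial.C (σ i) • charmatrix Mr k i)
      = fun k => Polynomial.C (σ k) * Polynomial.X from funext hcol] at h1
  rw [show (fun k => Polynomial.C (σ k) * Polynomial.X)
      = (Polynomial.X : Polynomial ℝ) • (fun k : Fin n => Polynomial.C (σ k)) from
        funext fun k => by rw [Pi.smul_apply, smul_eq_mul, mul_comm]] at h1
  rw [Matrix.det_updateCol_smul] at h1
  set q0 := ((charmatrix Mr).updateCol j₀ fun k => Polynomial.C (σ k)).det with hq0
  set R₀ := (Matrix.of fun k i => if i = j₀ then σ k else -(Mr k i)) with hR₀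
  have hq0eval : q0.eval 0 = R₀.det := by
    rw [hq0, ← Polynomial.coe_evalRingHom, RingHom.map_det]
    congr 1
    ext k i
    by_cases h : i = j₀
    · simp [Matrix.updateCol_apply, h, hR₀]
    · rcases eq_or_ne k i with h2 | h2
      · subst h2
        simp [Matrix.updateCol_apply, h, hR₀, charmatrix_apply_eq]
      · simp [Matrix.updateCol_apply, h, hR₀, charmatrix_apply_ne _ _ _ h2]
  have hdetR : R₀.det ≠ 0 := by
    intro hdet
    obtain ⟨c, hc0, hcv⟩ := Matrix.exists_mulVec_eq_zero_iff.mpr hdet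
    set c' := Function.update c j₀ 0 with hc'
    have hc'app : ∀ i, c' i = if i = j₀ then 0 else c i := by
      intro i
      rw [hc', Function.update_apply]
    have hMc' : Mr *ᵥ c' = fun k => c j₀ * σ k := by
      funext k
      have h := congrFun hcv k
      have hh1 : (R₀ *ᵥ c) k = ∑ i, R₀ k i * c i := rfl
      have hh2 : (Mr *ᵥ c') k = ∑ i, Mr k i * c' i := rfl
      have h3 : ∀ i, R₀ k i * c i + Mr k i * c' i
          = if i = j₀ then σ k * c j₀ else 0 := by
        intro i
        by_cases hij : i = j₀
        · subst hij
          have e1 : R₀ k i = σ k := by rw [hR₀]; simp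
          have e2 : c' i = 0 := by rw [hc'app]; simp
          rw [e1, e2, if_pos rfl]; ring
        · have e1 : R₀ k i = -(Mr k i) := by rw [hR₀]; simp [hij]
          have e2 : c' i = c i := by rw [hc'app, if_neg hij]
          rw [e1, e2, if_neg hij]; ring
      have h4 : (R₀ *ᵥ c) k + (Mr *ᵥ c') k = σ k * c j₀ := by
        rw [hh1, hh2, ← Finset.sum_add_distrib,
          Finset.sum_congr rfl fun i _ => h3 i,
          Finset.sum_ite_eq' Finset.univ j₀ (fun _ => σ k * c j₀)]
        simp
      rw [h, Pi.zero_apply, zero_add] at h4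
      rw [h4]; ring
    have hcj0 : c j₀ = 0 := by
      have h := gauge_left_null hn hsc hσ hbal c'
      rw [hMc'] at h
      have h5 : σ ⬝ᵥ (fun k => c j₀ * σ k) = (n : ℝ) * c j₀ := by
        have hk : ∀ k, σ k * (c j₀ * σ k) = c j₀ := by
          intro k
          have h6 := gauge_sq hσ k
          linear_combination (c j₀) * h6
        simp only [dotProduct]
        rw [Finset.sum_congr rfl fun k _ => hk k]
        simp [Finset.sum_const, Finset.card_univ, mul_comm]
      rw [h5] at h
      have hn0 : (n : ℝ) ≠ 0 := Nat.cast_ne_zero.mpr (by omega)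
      exact (mul_eq_zero.mp h).resolve_left hn0
    have hMc0 : Mr *ᵥ c' = 0 := by
      rw [hMc']
      funext k
      simp [hcj0]
    have hLc' : lapOf A *ᵥ c' = 0 := by
      rw [hMr, ← Matrix.mulVec_mulVec] at hMc0
      funext k
      have h := congrFun hMc0 k
      have hh1 : (Wmat A *ᵥ (lapOf A *ᵥ c')) k = minorDet A k * (lapOf A *ᵥ c') k := by
        simp [Wmat, Matrix.mulVec_diagonal]
      rw [hh1] at h
      have hw := (minorDet_pos hn hsc (A := A) k).ne'
      rw [Pi.zero_apply] at h ⊢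
      exact (mul_eq_zero.mp h).resolve_left hw
    have hbar : lapBar A *ᵥ (fun k => σ k * c' k) = 0 := by
      funext k
      have h0 : (lapBar A *ᵥ (fun k => σ k * c' k)) k
          = ∑ j, lapBar A k j * (σ j * c' j) := rfl
      have hLk : (lapOf A *ᵥ c') k = ∑ j, lapOf A k j * c' j := rfl
      have hterm : ∀ j, lapBar A k j * (σ j * c' j) = σ k * (lapOf A k j * c' j) := by
        intro j
        have hb := bal_eq hσ hbal k j
        have hg := gauge_sq hσ k
        rw [lapBar_apply, lapOf_apply]
        rcases eq_or_ne k j with h | h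
        · subst h
          rw [if_pos rfl]
          linear_combination (σ k * c' k) * hb + (σ k * c' k * |A k k|) * hg
        · rw [if_neg h]
          linear_combination (σ k * c' j) * hb + (σ j * c' j * |A k j|) * hg
      rw [h0, Finset.sum_congr rfl fun j _ => hterm j, ← Finset.mul_sum, ← hLk,
        congrFun hLc' k]
      simp
    have hconstc : ∀ k, σ k * c' k = 0 := by
      intro k
      have h := kernel_lapBar hsc _ hbar k j₀
      have h2 : σ j₀ * c' j₀ = 0 := by rw [hc'app]; simp
      simpa [h2] using h
    have hc'0 : ∀ k, c' k = 0 := by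
      intro k
      rcases mul_eq_zero.mp (hconstc k) with h | h
      · exact absurd h (gauge_ne hσ k)
      · exact h
    apply hc0
    funext k
    by_cases h : k = j₀
    · subst h; exact hcj0
    · have h7 := hc'0 k
      rwa [hc'app, if_neg h] at h7
  have hch : Polynomial.C (σ j₀) • Mr.charpoly = Polynomial.X * q0 := by
    rw [Matrix.charpoly]
    exact h1.symm
  rcases hσ j₀ with hj | hj
  · refine ⟨q0, ?_, ?_⟩
    · rw [← hch, hj]
      simp
    · rw [hq0eval]
      exact hdetR
  · refine ⟨-q0, ?_, ?_⟩
    · rw [mul_neg, ← hch, hj]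
      simp
    · simp only [Polynomial.eval_neg, ne_eq, neg_eq_zero]
      rw [hq0eval]
      exact hdetR


lemma rootMult_one {q : Polynomial ℝ}
    (hq : (Wmat A * lapOf A).charpoly = Polynomial.X * q) (h0 : q.eval 0 ≠ 0) :
    Polynomial.rootMultiplicity 0 (((Wmat A * lapOf A).map Complex.ofReal).charpoly) = 1 := by
  have hcast : (Wmat A * lapOf A).map Complex.ofReal
      = (Wmat A * lapOf A).map ⇑(Complex.ofRealHom : ℝ →+* ℂ) := rfl
  rw [hcast, Matrix.charpoly_map, hq, Polynomial.map_mul, Polynomial.map_X]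
  set Q := q.map (Complex.ofRealHom : ℝ →+* ℂ) with hQdef
  have hQ0 : Q.eval 0 ≠ 0 := by
    rw [← Polynomial.coeff_zero_eq_eval_zero, hQdef, Polynomial.coeff_map]
    intro h
    apply h0
    rw [← Polynomial.coeff_zero_eq_eval_zero]
    exact Complex.ofReal_eq_zero.mp h
  have hQne : Q ≠ 0 := fun h => hQ0 (by rw [h]; simp)
  have hXQ : Polynomial.X * Q ≠ 0 := mul_ne_zero Polynomial.X_ne_zero hQne
  rw [Polynomial.rootMultiplicity_mul hXQ]
  have h1 : Polynomial.rootMultiplicity 0 (Polynomial.X : Polynomial ℂ) = 1 := by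
    have := Polynomial.rootMultiplicity_X_sub_C_self (x := (0:ℂ))
    simpa using this
  have h2 : Polynomial.rootMultiplicity 0 Q = 0 :=
    Polynomial.rootMultiplicity_eq_zero hQ0
  rw [h1, h2]

end Aux

/-- `G` is structurally balanced iff `W·L` has `0` as a simple eigenvalue
and every other complex eigenvalue has strictly positive real part. -/
theorem balanced_iff_WL_spectrum (n : ℕ) (hn : 2 ≤ n)
    (A : Matrix (Fin n) (Fin n) ℝ)
    (hdiag : ∀ i, A i i = 0) (hdigon : ∀ i j, 0 ≤ A i j * A j i)
    (hsc : StronglyConnected A) :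
    StructBalanced A ↔
      (Polynomial.rootMultiplicity 0 (((Wmat A * lapOf A).map Complex.ofReal).charpoly) = 1 ∧
        ∀ μ : ℂ, μ ≠ 0 →
          (((Wmat A * lapOf A).map Complex.ofReal).charpoly).IsRoot μ → 0 < μ.re) := by
  haveI : Nonempty (Fin n) := ⟨⟨0, by omega⟩⟩
  constructor
  · rintro ⟨σ, hσ, hbal⟩
    obtain ⟨q, hq, hq0⟩ := charpoly_factor hn hsc hσ hbal
    refine ⟨rootMult_one hq hq0, ?_⟩
    intro μ hμ hroot
    obtain ⟨z, hz0, hz⟩ := eigvec_of_root _ hroot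
    set u : Fin n → ℝ := fun i => (z i).re with hudef
    set v : Fin n → ℝ := fun i => (z i).im with hvdef
    have hu := eig_re hz
    have hv := eig_im hz
    have ldot : ∀ (a b : Fin n → ℝ), a ⬝ᵥ b = ∑ i, a i * b i := fun _ _ => rfl
    have hdots : u ⬝ᵥ ((Wmat A * lapOf A) *ᵥ u) + v ⬝ᵥ ((Wmat A * lapOf A) *ᵥ v)
        = μ.re * (u ⬝ᵥ u + v ⬝ᵥ v) := by
      rw [hu, hv, ldot, ldot, ldot, ldot, ← Finset.sum_add_distrib, mul_add,
        Finset.mul_sum, Finset.mul_sum, ← Finset.sum_add_distrib]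
      apply Finset.sum_congr rfl
      intros; ring
    have h1 := quad_nonneg hn hsc (A := A) u
    have h2 := quad_nonneg hn hsc (A := A) v
    obtain ⟨i₁, hi₁⟩ : ∃ i, z i ≠ 0 := by simpa [funext_iff] using hz0
    have hi₁' : u i₁ ≠ 0 ∨ v i₁ ≠ 0 := by
      by_contra hcon
      push_neg at hcon
      exact hi₁ (Complex.ext hcon.1 hcon.2)
    have hS : 0 < u ⬝ᵥ u + v ⬝ᵥ v := by
      rw [ldot, ldot, ← Finset.sum_add_distrib]
      have hterm : ∀ i ∈ Finset.univ, (0:ℝ) ≤ u i * u i + v i * v i := by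
        intro i _
        nlinarith [mul_self_nonneg (u i), mul_self_nonneg (v i)]
      have hsum := Finset.single_le_sum hterm (Finset.mem_univ i₁)
      rcases hi₁' with h | h
      · have hh : 0 < u i₁ * u i₁ + v i₁ * v i₁ := by
          nlinarith [mul_self_pos.mpr h, mul_self_nonneg (v i₁)]
        linarith
      · have hh : 0 < u i₁ * u i₁ + v i₁ * v i₁ := by
          nlinarith [mul_self_pos.mpr h, mul_self_nonneg (u i₁)]
        linarith
    have hre0 : 0 ≤ μ.re := by nlinarith
    rcases eq_or_lt_of_le hre0 with heq | hlt
    · exfalso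
      have hd1 : u ⬝ᵥ ((Wmat A * lapOf A) *ᵥ u) = 0 := by nlinarith
      have hd2 : v ⬝ᵥ ((Wmat A * lapOf A) *ᵥ v) = 0 := by nlinarith
      have hPu : PhiE A u = 0 := by rw [quad_eq hn hsc, hd1]; ring
      have hPv : PhiE A v = 0 := by rw [quad_eq hn hsc, hd2]; ring
      have hMzero : ∀ x : Fin n → ℝ, PhiE A x = 0 → (Wmat A * lapOf A) *ᵥ x = 0 := by
        intro x hPx
        have hedge := phiE_zero_edge hn hsc x hPx
        have hgc : ∀ k l, σ k * x k = σ l * x l := by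
          apply edge_propagate hsc
          intro i j hij
          have h := hedge i j hij
          rw [bal_sign hσ hbal i j hij] at h
          have h1 := gauge_sq hσ i
          linear_combination (σ i) * h + (σ j * x j) * h1
        set i₀ : Fin n := ⟨0, by omega⟩ with hi₀
        have hxval : ∀ k, x k = (σ i₀ * x i₀) * σ k := by
          intro k
          have h := hgc k i₀
          have h1 := gauge_sq hσ k
          linear_combination (σ k) * h - (x k) * h1
        have hxe : x = (σ i₀ * x i₀) • σ := funext fun k => by rw [hxval k]; rfl
        rw [hxe, Matrix.mulVec_smul, gauge_mulVec_zero hσ hbal, smul_zero]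
      have hMu0 := hMzero u hPu
      have hMv0 := hMzero v hPv
      have hfu : ∀ i, μ.re * u i - μ.im * v i = 0 := by
        intro i
        have := congrFun (hu.symm.trans hMu0) i
        simpa using this
      have hfv : ∀ i, μ.re * v i + μ.im * u i = 0 := by
        intro i
        have := congrFun (hv.symm.trans hMv0) i
        simpa using this
      rcases eq_or_ne μ.im 0 with him | him
      · exact hμ (by apply Complex.ext <;> simp [← heq, him])
      · have e1 := hfu i₁
        have e2 := hfv i₁
        rw [← heq] at e1 e2
        have hv0 : v i₁ = 0 := by
          have : μ.im * v i₁ = 0 := by linarith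
          exact (mul_eq_zero.mp this).resolve_left him
        have hu0 : u i₁ = 0 := by
          have : μ.im * u i₁ = 0 := by linarith
          exact (mul_eq_zero.mp this).resolve_left him
        rcases hi₁' with h | h
        · exact h hu0
        · exact h hv0
    · exact hlt
  · rintro ⟨hmult, -⟩
    set N := (Wmat A * lapOf A).map Complex.ofReal with hN
    have hNc : N.charpoly ≠ 0 := (Matrix.charpoly_monic N).ne_zero
    have hroot : N.charpoly.IsRoot 0 := by
      apply (Polynomial.rootMultiplicity_pos hNc (x := 0)).mp
      rw [hmult]
      norm_num
    obtain ⟨z, hz0, hz⟩ := eigvec_of_root N hroot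
    have hu := eig_re (μ := 0) hz
    have hv := eig_im (μ := 0) hz
    have hMu : (Wmat A * lapOf A) *ᵥ (fun i => (z i).re) = 0 := by
      rw [hu]; funext i; simp
    have hMv : (Wmat A * lapOf A) *ᵥ (fun i => (z i).im) = 0 := by
      rw [hv]; funext i; simp
    obtain ⟨i₁, hi₁⟩ : ∃ i, z i ≠ 0 := by simpa [funext_iff] using hz0
    have hi₁' : (z i₁).re ≠ 0 ∨ (z i₁).im ≠ 0 := by
      by_contra hcon
      push_neg at hcon
      exact hi₁ (Complex.ext hcon.1 hcon.2)
    obtain ⟨x, hMx, hx1⟩ : ∃ x : Fin n → ℝ, (Wmat A * lapOf A) *ᵥ x = 0 ∧ x i₁ ≠ 0 := by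
      rcases hi₁' with h | h
      · exact ⟨_, hMu, h⟩
      · exact ⟨_, hMv, h⟩
    have hquad : x ⬝ᵥ ((Wmat A * lapOf A) *ᵥ x) = 0 := by
      rw [hMx]
      simp [dotProduct]
    have hPhi : PhiE A x = 0 := by rw [quad_eq hn hsc, hquad]; ring
    have hedge := phiE_zero_edge hn hsc x hPhi
    have hsign1 : ∀ i j, A i j ≠ 0 → |Real.sign (A i j)| = 1 := by
      intro i j hij
      rcases lt_trichotomy (A i j) 0 with h | h | h
      · rw [Real.sign_of_neg h]; norm_num
      · exact absurd h hij
      · rw [Real.sign_of_pos h]; norm_num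
    have habs : ∀ k l, |x k| = |x l| := by
      apply edge_propagate hsc
      intro i j hij
      rw [hedge i j hij, abs_mul, hsign1 i j hij, one_mul]
    have hxk : ∀ k, x k ≠ 0 := by
      intro k hk
      have h := habs k i₁
      rw [hk, abs_zero] at h
      exact hx1 (abs_eq_zero.mp h.symm)
    refine ⟨fun k => if 0 < x k then 1 else -1,
      fun k => by by_cases h : 0 < x k <;> simp [h], ?_⟩
    intro i j
    show 0 ≤ (if 0 < x i then (1:ℝ) else -1) * A i j * (if 0 < x j then (1:ℝ) else -1)
    by_cases hij : A i j = 0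
    · rw [hij]
      simp
    · have hx := hedge i j hij
      rcases lt_trichotomy (A i j) 0 with hA | hA | hA
      · rw [Real.sign_of_neg hA] at hx
        rcases (hxk j).lt_or_gt with hj | hj
        · have hxi : 0 < x i := by rw [hx]; linarith
          rw [if_pos hxi, if_neg (not_lt.mpr hj.le)]
          nlinarith
        · have hxi : ¬ 0 < x i := not_lt.mpr (by rw [hx]; linarith)
          rw [if_neg hxi, if_pos hj]
          nlinarith
      · exact absurd hA hij
      · rw [Real.sign_of_pos hA] at hx
        rcases (hxk j).lt_or_gt with hj | hj
        · have hxi : ¬ 0 < x i := not_lt.mpr (by rw [hx]; linarith)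
          rw [if_neg hxi, if_neg (not_lt.mpr hj.le)]
          nlinarith
        · have hxi : 0 < x i := by rw [hx]; linarith
          rw [if_pos hxi, if_pos hj]
          nlinarith
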